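/- Let k > 0, let m ≥ 2 be an integer, and let R > 0. Set S(t) = sinh(kt)/k and define E(t) = ∫_t^R (1/S(σ)^{m-2})·(∫₀^σ S(s)^{m-2} ds) dσ for t ∈ (0,R]. Then on the interval (0,R) the function t ↦ E'(t)/S(t) is negative and strictly monotone increasing. -/

import Mathlib

open Set intervalIntegral Real

/-- Markvorsen's Proposition 4, radial form, hyperbolic case: with `S(t) = sinh(kt)/k` and
`E(t) = ∫_t^R (1/S(σ)^(m-2)) ∫₀^σ S(s)^(m-2) ds dσ`, the function `t ↦ E'(t)/S(t)` is
negative and strictly increasing on `(0,R)`. -/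
theorem stmt_6 (k : ℝ) (hk : 0 < k) (m : ℕ) (hm : 2 ≤ m) (R : ℝ) (hR : 0 < R)
    (S : ℝ → ℝ) (hS : ∀ t, S t = Real.sinh (k * t) / k)
    (E : ℝ → ℝ)
    (hE : ∀ t, E t = ∫ σ in t..R, (1 / S σ ^ (m - 2)) * ∫ s in (0:ℝ)..σ, S s ^ (m - 2)) :
    (∀ t ∈ Set.Ioo 0 R, deriv E t / S t < 0) ∧
      StrictMonoOn (fun t => deriv E t / S t) (Set.Ioo 0 R) := by
  set n := m - 2 with hn
  -- basic facts about S
  have hSc : Continuous S := by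
    have : S = fun t => Real.sinh (k*t) / k := funext hS
    rw [this]; fun_prop
  have hSd : ∀ t, HasDerivAt S (Real.cosh (k*t)) t := by
    intro t
    have h1 : HasDerivAt (fun t : ℝ => k * t) k t := by
      simpa using (hasDerivAt_id t).const_mul k
    have h2 := ((Real.hasDerivAt_sinh (k*t)).comp t h1).div_const k
    have : S = fun t => Real.sinh (k*t) / k := funext hS
    rw [this]
    exact h2.congr_deriv (mul_div_cancel_right₀ _ hk.ne')
  have hSpos : ∀ t : ℝ, 0 < t → 0 < S t := fun t ht => by
    rw [hS]; exact div_pos (Real.sinh_pos_iff.2 (mul_pos hk ht)) hk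
  have hS0 : S 0 = 0 := by rw [hS]; simp
  -- A
  set A : ℝ → ℝ := fun t => ∫ s in (0:ℝ)..t, S s ^ n with hA
  have hAc : Continuous A := by
    apply intervalIntegral.continuous_primitive
    exact fun a b => (hSc.pow n).intervalIntegrable a b
  have hAd : ∀ t, HasDerivAt A (S t ^ n) t := fun t =>
    intervalIntegral.integral_hasDerivAt_right ((hSc.pow n).intervalIntegrable 0 t)
      ((hSc.pow n).stronglyMeasurable.stronglyMeasurableAtFilter)
      (hSc.pow n).continuousAt
  have hApos : ∀ t : ℝ, 0 < t → 0 < A t := fun t ht =>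
    intervalIntegral.intervalIntegral_pos_of_pos_on ((hSc.pow n).intervalIntegrable 0 t)
      (fun s hs => pow_pos (hSpos s hs.1) n) ht
  -- f and derivative of E
  set f : ℝ → ℝ := fun σ => (1 / S σ ^ n) * A σ with hf
  have hfcont : ContinuousOn f (Ioi (0:ℝ)) := by
    apply ContinuousOn.mul
    · apply ContinuousOn.div continuousOn_const ((hSc.pow n).continuousOn)
      intro x hx; exact (pow_pos (hSpos x hx) n).ne'
    · exact hAc.continuousOn
  have hEd : ∀ t ∈ Ioo 0 R, HasDerivAt E (-(f t)) t := by
    intro t ht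
    have hsub : uIcc R t ⊆ Ioi (0:ℝ) := by
      rw [uIcc_comm, uIcc_of_le ht.2.le]
      exact fun x hx => lt_of_lt_of_le ht.1 hx.1
    have hint : IntervalIntegrable f MeasureTheory.volume R t :=
      (hfcont.mono hsub).intervalIntegrable
    have hd := intervalIntegral.integral_hasDerivAt_right hint
      (hfcont.stronglyMeasurableAtFilter isOpen_Ioi t ht.1)
      ((hfcont.continuousAt (isOpen_Ioi.mem_nhds ht.1)))
    have hEeq : E = fun u => -∫ σ in R..u, f σ := by
      funext u
      rw [hE u, intervalIntegral.integral_symm]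
    rw [hEeq]
    exact hd.neg
  -- the quotient function
  have hp : n + 1 = m - 1 := by omega
  set G : ℝ → ℝ := fun t => -(A t / S t ^ (n+1)) with hG
  have hGeq : ∀ t ∈ Ioo 0 R, deriv E t / S t = G t := by
    intro t ht
    rw [(hEd t ht).deriv]
    have hs := (hSpos t ht.1).ne'
    have hsn : S t ^ n ≠ 0 := pow_ne_zero n hs
    simp only [hf, hG]
    rw [pow_succ]
    field_simp
  -- key inequality
  have key : ∀ t : ℝ, 0 < t → S t ^ (n+1) < (n+1 : ℝ) * Real.cosh (k*t) * A t := by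
    intro t ht
    have hder : ∀ x ∈ uIcc (0:ℝ) t, HasDerivAt (fun u => S u ^ (n+1))
        ((n+1 : ℕ) * S x ^ n * Real.cosh (k*x)) x := by
      intro x _
      exact ((hSd x).pow (n+1)).congr_deriv (by simp)
    have hcont' : Continuous fun x => (n+1 : ℕ) * S x ^ n * Real.cosh (k*x) := by fun_prop
    have heq : S t ^ (n+1) = ∫ x in (0:ℝ)..t, (n+1 : ℕ) * S x ^ n * Real.cosh (k*x) := by
      rw [intervalIntegral.integral_eq_sub_of_hasDerivAt hder (hcont'.intervalIntegrable 0 t),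
        hS 0]
      simp
    rw [heq]
    have hlt : (∫ x in (0:ℝ)..t, (n+1 : ℕ) * S x ^ n * Real.cosh (k*x)) <
        ∫ x in (0:ℝ)..t, (n+1 : ℕ) * S x ^ n * Real.cosh (k*t) := by
      refine intervalIntegral.integral_lt_integral_of_continuousOn_of_le_of_exists_lt ht
        hcont'.continuousOn (by fun_prop) ?_ ?_
      · intro x hx
        have hc : Real.cosh (k*x) ≤ Real.cosh (k*t) := by
          rw [Real.cosh_le_cosh,
            abs_of_nonneg (mul_nonneg hk.le hx.1.le),
            abs_of_nonneg (mul_nonneg hk.le (hx.1.le.trans hx.2))]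
          exact mul_le_mul_of_nonneg_left hx.2 hk.le
        have hnn : (0:ℝ) ≤ (n+1 : ℕ) * S x ^ n :=
          mul_nonneg (by positivity) (pow_nonneg (hSpos x hx.1).le n)
        exact mul_le_mul_of_nonneg_left hc hnn
      · refine ⟨t/2, ⟨by positivity, by linarith⟩, ?_⟩
        have hc : Real.cosh (k*(t/2)) < Real.cosh (k*t) := by
          rw [Real.cosh_lt_cosh,
            abs_of_nonneg (by positivity), abs_of_nonneg (by positivity)]
          nlinarith
        have hpos' : (0:ℝ) < (n+1 : ℕ) * S (t/2) ^ n :=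
          mul_pos (by positivity) (pow_pos (hSpos _ (by positivity)) n)
        exact mul_lt_mul_of_pos_left hc hpos'
    have heq2 : (∫ x in (0:ℝ)..t, (n+1 : ℕ) * S x ^ n * Real.cosh (k*t)) =
        (n+1 : ℝ) * Real.cosh (k*t) * A t := by
      have : ∀ x, (n+1 : ℕ) * S x ^ n * Real.cosh (k*t)
          = ((n+1 : ℝ) * Real.cosh (k*t)) * S x ^ n := by intro x; push_cast; ring
      simp_rw [this]
      rw [intervalIntegral.integral_const_mul]
    exact hlt.trans_le (le_of_eq heq2)
  -- derivative of G and positivity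
  have hGd : ∀ t ∈ Ioo 0 R, HasDerivAt G
      (-((S t ^ n * S t ^ (n+1) - A t * (((n:ℝ)+1) * S t ^ n * Real.cosh (k*t))) /
        (S t ^ (n+1))^2)) t := by
    intro t ht
    have hSne : S t ^ (n+1) ≠ 0 := (pow_pos (hSpos t ht.1) (n+1)).ne'
    have hdiv := (hAd t).div (by simpa using (hSd t).pow (n+1)) hSne
    exact hdiv.neg
  have hGpos : ∀ t ∈ Ioo 0 R, 0 < deriv G t := by
    intro t ht
    rw [(hGd t ht).deriv]
    have hst := hSpos t ht.1
    have hkey := key t ht.1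
    have h1 : 0 < A t * (((n:ℝ)+1) * S t ^ n * Real.cosh (k*t)) - S t ^ n * S t ^ (n+1) := by
      have : S t ^ n * S t ^ (n+1) < S t ^ n * ((n+1 : ℝ) * Real.cosh (k*t) * A t) :=
        mul_lt_mul_of_pos_left hkey (pow_pos hst n)
      nlinarith
    have h2 : (0:ℝ) < (S t ^ (n+1))^2 := by positivity
    exact neg_pos.2 (div_neg_of_neg_of_pos (by linarith) h2)
  have hGmono : StrictMonoOn G (Ioo 0 R) := by
    apply strictMonoOn_of_deriv_pos (convex_Ioo 0 R)
    · apply ContinuousOn.neg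
      apply ContinuousOn.div hAc.continuousOn (hSc.pow (n+1)).continuousOn
      intro x hx; exact (pow_pos (hSpos x hx.1) (n+1)).ne'
    · rw [interior_Ioo]; exact hGpos
  constructor
  · intro t ht
    rw [hGeq t ht]
    have := hApos t ht.1
    have := pow_pos (hSpos t ht.1) (n+1)
    simp only [hG]
    rw [neg_lt, neg_zero]
    positivity
  · intro x hx y hy hxy
    simp only
    rw [hGeq x hx, hGeq y hy]
    exact hGmono hx hy hxy
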